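/- arXiv:2104.12082 — 5 statements merged into one kernel-verified Lean document; each statement's English description precedes it below -/
import Mathlib

section
/- Let G be a connected orderenergetic graph of order p and let m ≥ 1. Then the m-shadow graph D_m(G) is connected and orderenergetic, i.e., D_m(G) has mp vertices and ε(D_m(G)) = mp. -/
open Matrix SimpleGraph Finset

variable {V W : Type*}

/-- The adjacency matrix of a simple graph over ℝ is Hermitian. -/
lemma adjMatrix_isHermitian [Fintype V] [DecidableEq V] (G : SimpleGraph V)
    [DecidableRel G.Adj] : (G.adjMatrix ℝ).IsHermitian := by
  rw [Matrix.IsHermitian, Matrix.conjTranspose_eq_transpose_of_trivial]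
  exact G.isSymm_adjMatrix

/-- The energy of a finite simple graph: the sum of the absolute values of the
eigenvalues of its real adjacency matrix. -/
noncomputable def graphEnergy [Fintype V] [DecidableEq V] (G : SimpleGraph V) : ℝ := by
  classical
  exact ∑ i, |(adjMatrix_isHermitian G).eigenvalues i|

/-- The spectrum of a finite simple graph: the multiset of eigenvalues (with
multiplicity) of its real adjacency matrix. -/
noncomputable def graphSpectrum [Fintype V] [DecidableEq V] (G : SimpleGraph V) : Multiset ℝ := by
  classical
  exact Finset.univ.val.map (adjMatrix_isHermitian G).eigenvalues

/-- A graph is integral if every eigenvalue of its adjacency matrix is an integer. -/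
def IsIntegralGraph [Fintype V] [DecidableEq V] (G : SimpleGraph V) : Prop :=
  ∀ x ∈ graphSpectrum G, ∃ k : ℤ, x = (k : ℝ)

/-- The m-shadow graph of `G`, on vertex set `Fin m × V`: `(i,u)` and `(j,v)` are
adjacent iff `u` and `v` are adjacent in `G`. -/
def shadowGraph (m : ℕ) (G : SimpleGraph V) : SimpleGraph (Fin m × V) where
  Adj x y := G.Adj x.2 y.2
  symm := ⟨fun _ _ h => h.symm⟩
  loopless := ⟨fun _ h => G.loopless.irrefl _ h⟩

/-- The duplicate graph of `G`, on vertex set `V ⊕ V`: `inl a` is adjacent to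
`inr b` iff `a` and `b` are adjacent in `G`; no other adjacencies. -/
def duplicateGraph (G : SimpleGraph V) : SimpleGraph (V ⊕ V) where
  Adj x y :=
    match x, y with
    | Sum.inl a, Sum.inr b => G.Adj a b
    | Sum.inr a, Sum.inl b => G.Adj a b
    | _, _ => False
  symm := ⟨by rintro (a | a) (b | b) h <;> first | exact h.symm | exact h.elim⟩
  loopless := ⟨by rintro (a | a) h <;> exact h⟩

/-- The Kronecker (tensor) product of two simple graphs. -/
def tensorGraph (G : SimpleGraph V) (H : SimpleGraph W) : SimpleGraph (V × W) where
  Adj x y := G.Adj x.1 y.1 ∧ H.Adj x.2 y.2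
  symm := ⟨fun _ _ h => ⟨h.1.symm, h.2.symm⟩⟩
  loopless := ⟨fun _ h => G.loopless.irrefl _ h.1⟩

/-- The m-splitting graph of `G`, on vertex set `V ⊕ (Fin m × V)`: original
vertices keep their adjacencies, an original vertex `u` is adjacent to a copy
`(i,v)` iff `u` is adjacent to `v` in `G`, and copies are pairwise non-adjacent. -/
def splittingGraph (m : ℕ) (G : SimpleGraph V) : SimpleGraph (V ⊕ (Fin m × V)) where
  Adj x y :=
    match x, y with
    | Sum.inl u, Sum.inl v => G.Adj u v
    | Sum.inl u, Sum.inr iv => G.Adj u iv.2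
    | Sum.inr iu, Sum.inl v => G.Adj iu.2 v
    | Sum.inr _, Sum.inr _ => False
  symm := ⟨by rintro (u | iu) (v | iv) h <;> first | exact h.symm | exact h.elim⟩
  loopless := ⟨by rintro (u | iu) h <;> first | exact G.loopless.irrefl _ h | exact h⟩

/-- The join of two simple graphs: their disjoint union together with all edges
between the two parts. -/
def joinGraph (G : SimpleGraph V) (H : SimpleGraph W) : SimpleGraph (V ⊕ W) where
  Adj x y :=
    match x, y with
    | Sum.inl a, Sum.inl b => G.Adj a b
    | Sum.inr a, Sum.inr b => H.Adj a b
    | _, _ => True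
  symm := ⟨by rintro (a | a) (b | b) h <;> first | exact h.symm | trivial⟩
  loopless := ⟨by rintro (a | a) h <;> first | exact G.loopless.irrefl _ h | exact H.loopless.irrefl _ h⟩

/-- The superpath graph on a sequence of part sizes: independent sets `W i` of
size `a i`, where vertices in parts `i` and `j` are adjacent iff `|i - j| = 1`. -/
def superpathGraph {t : ℕ} (a : Fin t → ℕ) : SimpleGraph (Σ i : Fin t, Fin (a i)) where
  Adj x y := (x.1 : ℕ) + 1 = (y.1 : ℕ) ∨ (y.1 : ℕ) + 1 = (x.1 : ℕ)
  symm := ⟨fun _ _ h => h.symm⟩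
  loopless := ⟨fun x h => by omega⟩


section AuxSpectral

open Polynomial Kronecker

variable {n : Type*} [Fintype n] [DecidableEq n] {R : Type*} [CommRing R]

omit [Fintype n] in
lemma my_map_one : (1 : Matrix n n R).map (C : R →+* R[X]) = 1 :=
  Matrix.map_one _ (map_zero C) (map_one C)

lemma my_charmatrix_conj (P Q B : Matrix n n R) (h1 : P * Q = 1) :
    charmatrix (P * B * Q) = P.map C * charmatrix B * Q.map C := by
  have hmap : ∀ M N : Matrix n n R, (M * N).map (C : R →+* R[X]) = M.map C * N.map C := by
    intro M N; exact Matrix.map_mul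
  have hc : Matrix.scalar n (X : R[X]) * P.map C = P.map C * Matrix.scalar n (X : R[X]) :=
    (Matrix.scalar_commute (X : R[X]) (Commute.all X) (P.map C)).eq
  rw [charmatrix, charmatrix, mul_sub, sub_mul]
  congr 1
  · rw [← hc, mul_assoc, ← hmap, h1, my_map_one, mul_one]
  · simp only [RingHom.mapMatrix_apply]
    rw [hmap, hmap]

lemma my_charpoly_conj (P Q B : Matrix n n R) (h1 : P * Q = 1) :
    (P * B * Q).charpoly = B.charpoly := by
  have h : (P.map (C : R →+* R[X])).det * (Q.map C).det = 1 := by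
    rw [← Matrix.det_mul, ← Matrix.map_mul, h1, my_map_one, Matrix.det_one]
  rw [Matrix.charpoly, my_charmatrix_conj P Q B h1, Matrix.det_mul, Matrix.det_mul,
    Matrix.charpoly]
  calc (P.map C).det * (charmatrix B).det * (Q.map C).det
      = (charmatrix B).det * ((P.map (C : R →+* R[X])).det * (Q.map C).det) := by ring
    _ = (charmatrix B).det := by rw [h, mul_one]

lemma my_charpoly_diagonal (d : n → R) :
    (Matrix.diagonal d).charpoly = ∏ i, (X - C (d i)) := by
  have h : charmatrix (Matrix.diagonal d) = Matrix.diagonal fun i => X - C (d i) := by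
    ext i j
    by_cases h : i = j <;> simp [h, charmatrix_apply, Matrix.diagonal_apply, Matrix.diagonal]
  rw [Matrix.charpoly, h, Matrix.det_diagonal]

lemma my_charpoly_zero : (0 : Matrix n n R).charpoly = X ^ Fintype.card n := by
  have h : charmatrix (0 : Matrix n n R) = Matrix.diagonal fun _ : n => (X : R[X]) := by
    ext i j
    by_cases h : i = j <;> simp [h, charmatrix_apply, Matrix.diagonal]
  rw [Matrix.charpoly, h, Matrix.det_diagonal, Finset.prod_const, Finset.card_univ]

lemma my_herm_smul_charpoly {A : Matrix n n ℝ} (hA : A.IsHermitian) (c : ℝ) :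
    (c • A).charpoly = ∏ i, (X - C (c * hA.eigenvalues i)) := by
  have hU : (hA.eigenvectorUnitary : Matrix n n ℝ) *
      (star hA.eigenvectorUnitary : Matrix n n ℝ) = 1 :=
    (Matrix.mem_unitaryGroup_iff).mp hA.eigenvectorUnitary.2
  have hspec := hA.spectral_theorem
  have h2 : c • A = (hA.eigenvectorUnitary : Matrix n n ℝ) *
      Matrix.diagonal (fun i => c * hA.eigenvalues i) *
      (star hA.eigenvectorUnitary : Matrix n n ℝ) := by
    conv_lhs => rw [hspec, Unitary.conjStarAlgAut_apply]
    rw [← smul_mul_assoc, ← mul_smul_comm, ← Matrix.diagonal_smul]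
    congr 2
  rw [h2, my_charpoly_conj _ _ _ hU, my_charpoly_diagonal]

lemma my_herm_smul_roots {A : Matrix n n ℝ} (hA : A.IsHermitian) (c : ℝ) :
    ((c • A).charpoly).roots = Finset.univ.val.map (fun i => c * hA.eigenvalues i) := by
  rw [my_herm_smul_charpoly hA c]
  have h : (∏ i, (X - C (c * hA.eigenvalues i))) =
      ((Finset.univ.val.map fun i => c * hA.eigenvalues i).map fun a => X - C a).prod := by
    rw [Multiset.map_map]; rfl
  rw [h, Polynomial.roots_multiset_prod_X_sub_C]

lemma my_herm_spectrum_eq_roots {A : Matrix n n ℝ} (hA : A.IsHermitian) :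
    Finset.univ.val.map hA.eigenvalues = A.charpoly.roots := by
  have h := my_herm_smul_roots hA 1
  simp only [one_smul, one_mul] at h
  rw [h]

end AuxSpectral

section AuxShadow

open Polynomial Kronecker

def myE (k : ℕ) : Matrix (Fin (k+1)) (Fin (k+1)) ℝ :=
  Matrix.of fun i j => if j = 0 ∧ i ≠ 0 then 1 else 0

def myJ (k : ℕ) : Matrix (Fin (k+1)) (Fin (k+1)) ℝ := Matrix.of fun _ _ => 1

def myN (k : ℕ) : Matrix (Fin (k+1)) (Fin (k+1)) ℝ :=
  Matrix.of fun i j => if i = 0 then (if j = 0 then (k+1 : ℝ) else 1) else 0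

lemma myE_mul_myE (k : ℕ) : myE k * myE k = 0 := by
  ext i j
  simp only [Matrix.mul_apply, myE, Matrix.of_apply, Matrix.zero_apply]
  apply Finset.sum_eq_zero
  intro x _
  by_cases hx : x = 0 <;> simp [hx]

lemma my_inv (k : ℕ) : (1 - myE k) * (1 + myE k) = 1 := by
  rw [sub_mul, mul_add, mul_add, one_mul, one_mul, myE_mul_myE, mul_one]
  abel

lemma myL1 (k : ℕ) : (1 - myE k) * myJ k = Matrix.of fun i _ => if i = 0 then (1:ℝ) else 0 := by
  ext i j
  rw [Matrix.sub_mul, Matrix.one_mul]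
  simp only [Matrix.sub_apply, Matrix.mul_apply, myE, myJ, Matrix.of_apply]
  by_cases hi : i = 0
  · simp [hi]
  · simp [hi, Finset.sum_ite_eq' Finset.univ (0 : Fin (k+1))]

lemma mySumE (k : ℕ) (j : Fin (k+1)) :
    ∑ x, myE k x j = if j = 0 then (k : ℝ) else 0 := by
  simp only [myE, Matrix.of_apply]
  by_cases hj : j = 0
  · simp only [hj, if_true, true_and]
    rw [Finset.sum_boole]
    rw [Finset.filter_ne' Finset.univ (0 : Fin (k+1)),
      Finset.card_erase_of_mem (Finset.mem_univ _)]
    simp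
  · simp [hj]

lemma myPJP (k : ℕ) : (1 - myE k) * myJ k * (1 + myE k) = myN k := by
  rw [myL1]
  ext i j
  simp only [Matrix.mul_apply, Matrix.of_apply, Matrix.add_apply, myN]
  by_cases hi : i = 0
  · simp only [hi, if_true, one_mul]
    rw [Finset.sum_add_distrib]
    have h1 : ∑ x, (1 : Matrix (Fin (k+1)) (Fin (k+1)) ℝ) x j = 1 := by
      simp [Matrix.one_apply, Finset.sum_ite_eq' Finset.univ j]
    rw [h1, mySumE]
    by_cases hj : j = 0 <;> simp [hj] <;> ring
  · simp [hi]

variable [Fintype V] [DecidableEq V]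

omit [Fintype V] [DecidableEq V] in
lemma shadow_adjMatrix (k : ℕ) (G : SimpleGraph V) [DecidableRel G.Adj]
    [DecidableRel (shadowGraph (k+1) G).Adj] :
    (shadowGraph (k+1) G).adjMatrix ℝ = myJ k ⊗ₖ G.adjMatrix ℝ := by
  ext ⟨i, u⟩ ⟨j, v⟩
  by_cases h : G.Adj u v
  · rw [SimpleGraph.adjMatrix_apply]; simp [myJ, shadowGraph, h, Matrix.kroneckerMap_apply]
  · rw [SimpleGraph.adjMatrix_apply]; simp [myJ, shadowGraph, h, Matrix.kroneckerMap_apply]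

def myIdx (k : ℕ) (V : Type*) : Fin (k+1) × V ≃ V ⊕ (Fin k × V) where
  toFun x := Fin.cases (Sum.inl x.2) (fun i => Sum.inr (i, x.2)) x.1
  invFun y := match y with
    | .inl v => (0, v)
    | .inr (i, v) => (i.succ, v)
  left_inv := by
    rintro ⟨i, v⟩
    refine Fin.cases ?_ ?_ i <;> simp
  right_inv := by rintro (v | ⟨i, v⟩) <;> simp

set_option maxHeartbeats 800000 in
lemma shadow_charpoly (k : ℕ) (G : SimpleGraph V) [DecidableRel G.Adj]
    [DecidableRel (shadowGraph (k+1) G).Adj] :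
    ((shadowGraph (k+1) G).adjMatrix ℝ).charpoly
      = (((k : ℝ) + 1) • G.adjMatrix ℝ).charpoly * X ^ (k * Fintype.card V) := by
  set A := G.adjMatrix ℝ with hA
  have h1 : ((1 - myE k) ⊗ₖ (1 : Matrix V V ℝ)) * (myJ k ⊗ₖ A) *
      ((1 + myE k) ⊗ₖ (1 : Matrix V V ℝ)) = myN k ⊗ₖ A := by
    rw [← Matrix.mul_kronecker_mul, ← Matrix.mul_kronecker_mul, Matrix.one_mul, Matrix.mul_one,
      myPJP]
  have hPQ : ((1 - myE k) ⊗ₖ (1 : Matrix V V ℝ)) * ((1 + myE k) ⊗ₖ (1 : Matrix V V ℝ)) = 1 := by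
    rw [← Matrix.mul_kronecker_mul, my_inv, Matrix.one_mul, Matrix.one_kronecker_one]
  have h2 : (myJ k ⊗ₖ A).charpoly = (myN k ⊗ₖ A).charpoly := by
    rw [← h1]; exact (my_charpoly_conj _ _ _ hPQ).symm
  have h3 : Matrix.reindex (myIdx k V) (myIdx k V) (myN k ⊗ₖ A)
      = Matrix.fromBlocks (((k : ℝ) + 1) • A)
          (Matrix.of fun u (jv : Fin k × V) => A u jv.2) 0 0 := by
    ext y z
    rcases y with u | ⟨i, u⟩ <;> rcases z with v | ⟨j, v⟩ <;>
      simp [myIdx, Matrix.reindex_apply, Matrix.submatrix_apply, Matrix.kroneckerMap_apply,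
        myN, Fin.succ_ne_zero]
  rw [shadow_adjMatrix, h2, ← Matrix.charpoly_reindex (myIdx k V) (myN k ⊗ₖ A), h3,
    Matrix.charpoly_fromBlocks_zero₂₁, my_charpoly_zero]
  congr 2
  simp [mul_comm]

lemma graphEnergy_eq_multiset (G : SimpleGraph V) [inst : DecidableRel G.Adj] :
    graphEnergy G = (((G.adjMatrix ℝ).charpoly.roots).map (fun x => |x|)).sum := by
  have key : ∀ (inst' : DecidableRel G.Adj),
      (∑ i, |(@adjMatrix_isHermitian _ _ _ G inst').eigenvalues i|)
        = (((@SimpleGraph.adjMatrix ℝ _ G inst' _ _).charpoly.roots).map (fun x => |x|)).sum := by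
    intro inst'
    rw [← my_herm_spectrum_eq_roots (@adjMatrix_isHermitian _ _ _ G inst'), Multiset.map_map]
    rfl
  have hmat : ∀ (i1 i2 : DecidableRel G.Adj),
      @SimpleGraph.adjMatrix ℝ _ G i1 _ _ = @SimpleGraph.adjMatrix ℝ _ G i2 _ _ := by
    intro i1 i2
    ext u v
    by_cases h : G.Adj u v <;> simp [h]
  unfold graphEnergy
  rw [key _, hmat _ inst]

lemma graphEnergy_eq_sum (G : SimpleGraph V) [inst : DecidableRel G.Adj] :
    graphEnergy G = ∑ i, |(adjMatrix_isHermitian G).eigenvalues i| := by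
  rw [graphEnergy_eq_multiset,
    ← my_herm_spectrum_eq_roots (adjMatrix_isHermitian G), Multiset.map_map]
  rfl

end AuxShadow

/-- If `G` is a connected orderenergetic graph of order `p` and `m ≥ 1`, then the
m-shadow graph `D_m(G)` is connected and orderenergetic: it has `m * p` vertices
and energy `m * p`. -/
theorem shadowGraph_connected_orderenergetic [Fintype V] [DecidableEq V]
    (G : SimpleGraph V) (p m : ℕ) (hp : Fintype.card V = p)
    (hconn : G.Connected) (hord : graphEnergy G = p) (hm : 1 ≤ m) :
    (shadowGraph m G).Connected ∧ Fintype.card (Fin m × V) = m * p ∧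
      graphEnergy (shadowGraph m G) = (m * p : ℕ) := by
  classical
  obtain ⟨k, rfl⟩ : ∃ k, m = k + 1 := ⟨m - 1, by omega⟩
  have hV : Nonempty V := hconn.nonempty
  have hA : (G.adjMatrix ℝ).IsHermitian := adjMatrix_isHermitian G
  have hEG : graphEnergy G = ∑ i, |hA.eigenvalues i| := graphEnergy_eq_sum G
  -- the graph has at least two vertices
  have hne1 : Fintype.card V ≠ 1 := by
    intro h1
    haveI : Subsingleton V := Fintype.card_le_one_iff_subsingleton.mp (le_of_eq h1)
    have hA0 : G.adjMatrix ℝ = 0 := by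
      ext u v
      have huv : u = v := Subsingleton.elim u v
      subst huv
      simp
    have h0 : ∀ i, hA.eigenvalues i = 0 := by
      intro i
      have hroots := my_herm_spectrum_eq_roots hA
      conv at hroots => rhs; rw [hA0, my_charpoly_zero, Polynomial.roots_pow, Polynomial.roots_X]
      have hmem : hA.eigenvalues i ∈ Finset.univ.val.map hA.eigenvalues :=
        Multiset.mem_map_of_mem _ (Finset.mem_univ i)
      rw [hroots] at hmem
      have hcard0 : Fintype.card V ≠ 0 := by omega
      rw [Multiset.mem_nsmul, Multiset.mem_singleton] at hmem
      exact hmem.2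
    have hzero : graphEnergy G = 0 := by
      rw [hEG]
      simp [h0]
    have hp1 : p = 1 := by omega
    rw [hzero, hp1] at hord
    norm_num at hord
  have hcard2 : 1 < Fintype.card V := by
    have := Fintype.card_pos (α := V)
    omega
  have hnbr : ∀ v : V, ∃ w, G.Adj v w := by
    intro v
    obtain ⟨w, hw⟩ := Fintype.exists_ne_of_one_lt_card hcard2 v
    obtain ⟨walk⟩ := hconn.preconnected v w
    cases walk with
    | nil => exact absurd rfl hw
    | cons h q => exact ⟨_, h⟩
  haveI : Nonempty (Fin (k+1) × V) := ⟨(0, Classical.arbitrary V)⟩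
  refine ⟨⟨fun x y => ?_⟩, ?_, ?_⟩
  · -- preconnected
    obtain ⟨i, u⟩ := x
    obtain ⟨j, v⟩ := y
    obtain ⟨w, hw⟩ := hnbr v
    have h1 : (shadowGraph (k+1) G).Reachable (i, u) (i, w) :=
      SimpleGraph.Reachable.map
        (⟨fun a => (i, a), fun h => h⟩ : G →g shadowGraph (k+1) G)
        (hconn.preconnected u w)
    have h2 : (shadowGraph (k+1) G).Adj (i, w) (j, v) := hw.symm
    exact h1.trans h2.reachable
  · -- cardinality
    simp [Fintype.card_prod, Fintype.card_fin, hp]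
  · -- energy
    have hstep : graphEnergy (shadowGraph (k+1) G) =
        (((((k : ℝ) + 1) • G.adjMatrix ℝ).charpoly * Polynomial.X ^ (k * Fintype.card V)).roots.map
          (fun x => |x|)).sum := by
      rw [graphEnergy_eq_multiset, shadow_charpoly k G]
    rw [hstep, Polynomial.roots_mul (mul_ne_zero (Matrix.charpoly_monic _).ne_zero
      (pow_ne_zero _ Polynomial.X_ne_zero)), my_herm_smul_roots hA, Polynomial.roots_pow,
      Polynomial.roots_X, Multiset.map_add, Multiset.sum_add]
    have hz : (((k * Fintype.card V) • ({0} : Multiset ℝ)).map fun x => |x|).sum = 0 := by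
      rw [Multiset.map_nsmul]
      simp only [abs_zero, Multiset.map_singleton]
      rw [Multiset.sum_nsmul]
      simp
    rw [hz, add_zero]
    have hmain : ((Finset.univ.val.map fun i => ((k : ℝ) + 1) * hA.eigenvalues i).map
        fun x => |x|).sum = ((k : ℝ) + 1) * ∑ i, |hA.eigenvalues i| := by
      rw [Multiset.map_map]
      have : (Finset.univ.val.map ((fun x => |x|) ∘ fun i => ((k : ℝ) + 1) * hA.eigenvalues i)).sum
          = ∑ i, |((k : ℝ) + 1) * hA.eigenvalues i| := rfl
      rw [this, Finset.mul_sum]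
      refine Finset.sum_congr rfl fun i _ => ?_
      rw [abs_mul, abs_of_nonneg (by positivity)]
    rw [hmain, ← hEG, hord]
    push_cast
    ring
end

section
/- For every p ≥ 1, the Kronecker product K_{p,p} × K_{1,3} of the complete bipartite graph K_{p,p} with the star K_{1,3} has energy 4√3·p, and since 4√3·p < 8p it is hypoenergetic. -/
open Matrix SimpleGraph Finset


section MatAux
variable {n : Type*} [Fintype n] [DecidableEq n]

lemma trace_mul_self_eq_sum_sq (A : Matrix n n ℝ) (hA : A.IsHermitian) :
    (A * A).trace = ∑ i, hA.eigenvalues i ^ 2 := by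
  set U : Matrix n n ℝ := (hA.eigenvectorUnitary : Matrix n n ℝ) with hU
  have hUU : star U * U = 1 := (Matrix.mem_unitaryGroup_iff').mp hA.eigenvectorUnitary.2
  have hD := hA.spectral_theorem
  set D : Matrix n n ℝ := Matrix.diagonal (RCLike.ofReal ∘ hA.eigenvalues) with hDdef
  have key : A * A = U * (D * D) * star U := by
    rw [hD, Unitary.conjStarAlgAut_apply]
    simp only [← hU, ← hDdef]
    rw [show (U * D * star U) * (U * D * star U) = U * (D * (star U * U) * D) * star U by
      noncomm_ring]
    rw [hUU]
    noncomm_ring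
  rw [key, Matrix.trace_mul_cycle, ← Matrix.mul_assoc, hUU, Matrix.one_mul]
  rw [hDdef, Matrix.diagonal_mul_diagonal, Matrix.trace_diagonal]
  simp [sq]

lemma eigenvalues_cube (A : Matrix n n ℝ) (hA : A.IsHermitian) (c : ℝ)
    (h : A * (A * A) = c • A) (i : n) :
    hA.eigenvalues i ^ 3 = c * hA.eigenvalues i := by
  set μ := hA.eigenvalues i with hμ
  set v := ⇑(hA.eigenvectorBasis i) with hv
  have hv1 : A *ᵥ v = μ • v := hA.mulVec_eigenvectorBasis i
  have h3 : (A * (A * A)) *ᵥ v = (μ ^ 3) • v := by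
    rw [← Matrix.mulVec_mulVec, ← Matrix.mulVec_mulVec, hv1, Matrix.mulVec_smul, hv1,
      smul_smul, Matrix.mulVec_smul, hv1, smul_smul]
    ring_nf
  rw [h, Matrix.smul_mulVec, hv1, smul_smul] at h3
  have hvne : v ≠ 0 := fun h0 => hA.eigenvectorBasis.orthonormal.ne_zero i
    (by rw [hv] at h0; simpa using congrArg (WithLp.toLp 2) h0)
  obtain ⟨j, hj⟩ := Function.ne_iff.mp hvne
  have := congrFun h3 j
  simp only [Pi.smul_apply, smul_eq_mul] at this
  have hj' : v j ≠ 0 := hj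
  exact (mul_right_cancel₀ hj' this).symm

end MatAux

section EnergyAux
variable {n : Type*} [Fintype n] [DecidableEq n]

lemma sum_abs_eigenvalues (A : Matrix n n ℝ) (hA : A.IsHermitian) (c t : ℝ) (hc : 0 < c)
    (h3 : ∀ i, hA.eigenvalues i ^ 3 = c ^ 2 * hA.eigenvalues i)
    (ht : (A * A).trace = c * t) :
    ∑ i, |hA.eigenvalues i| = t := by
  have habs : ∀ i, c * |hA.eigenvalues i| = hA.eigenvalues i ^ 2 := by
    intro i
    set μ := hA.eigenvalues i with hμ
    have h := h3 i
    have hfac : μ * ((μ - c) * (μ + c)) = 0 := by linear_combination h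
    rcases mul_eq_zero.mp hfac with h0 | h1
    · simp [h0]
    rcases mul_eq_zero.mp h1 with h2 | hneg
    · have hμc : μ = c := by linarith
      rw [hμc, abs_of_pos hc]; ring
    · have hμc : μ = -c := by linarith
      rw [hμc, abs_neg, abs_of_pos hc]; ring
  have key : c * ∑ i, |hA.eigenvalues i| = c * t := by
    rw [Finset.mul_sum]
    simp_rw [habs]
    rw [← trace_mul_self_eq_sum_sq A hA, ht]
  exact mul_left_cancel₀ hc.ne' key

end EnergyAux


variable {V W : Type*}

section GraphAux
variable {V W : Type*} [Fintype V] [Fintype W] [DecidableEq V] [DecidableEq W]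

instance cbpDecidableAdj : DecidableRel (completeBipartiteGraph V W).Adj := fun v w =>
  show Decidable (v.isLeft ∧ w.isRight ∨ v.isRight ∧ w.isLeft) from inferInstance

set_option linter.unusedSectionVars false in
lemma cbp_adjMatrix_cube :
    letI A := (completeBipartiteGraph V W).adjMatrix ℝ
    A * (A * A) = ((Fintype.card V * Fintype.card W : ℕ) : ℝ) • A := by
  set A := (completeBipartiteGraph V W).adjMatrix ℝ with hA
  ext x y
  rcases x with i | i <;> rcases y with j | j <;>
    simp [hA, Matrix.mul_apply, Fintype.sum_sum_type, SimpleGraph.adjMatrix_apply,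
      Finset.mul_sum, Finset.sum_mul, mul_comm]

set_option linter.unusedSectionVars false in
lemma cbp_trace_sq :
    letI A := (completeBipartiteGraph V W).adjMatrix ℝ
    (A * A).trace = 2 * (Fintype.card V * Fintype.card W : ℕ) := by
  simp [Matrix.trace, Matrix.diag, Matrix.mul_apply, Fintype.sum_sum_type,
    SimpleGraph.adjMatrix_apply]
  ring

set_option linter.unusedSectionVars false in
lemma tensor_adjMatrix (G : SimpleGraph V) (H : SimpleGraph W)
    [DecidableRel G.Adj] [DecidableRel H.Adj] [DecidableRel (tensorGraph G H).Adj] :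
    (tensorGraph G H).adjMatrix ℝ =
      Matrix.kroneckerMap (· * ·) (G.adjMatrix ℝ) (H.adjMatrix ℝ) := by
  ext ⟨a, b⟩ ⟨c, d⟩
  simp only [SimpleGraph.adjMatrix_apply, Matrix.kroneckerMap_apply]
  by_cases h1 : G.Adj a c <;> by_cases h2 : H.Adj b d <;>
    simp [tensorGraph, h1, h2]

end GraphAux

open Kronecker in
lemma energy_value (p : ℕ) (hp : 1 ≤ p)
    [inst : DecidableRel (tensorGraph (completeBipartiteGraph (Fin p) (Fin p))
      (completeBipartiteGraph (Fin 1) (Fin 3))).Adj] :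
    ∑ i, |(adjMatrix_isHermitian (tensorGraph (completeBipartiteGraph (Fin p) (Fin p))
      (completeBipartiteGraph (Fin 1) (Fin 3)))).eigenvalues i| = 4 * Real.sqrt 3 * p := by
  have hp' : (1 : ℝ) ≤ (p : ℝ) := by exact_mod_cast hp
  have hs3 : (0:ℝ) < Real.sqrt 3 := Real.sqrt_pos.mpr (by norm_num)
  have h33 : Real.sqrt 3 * Real.sqrt 3 = 3 := Real.mul_self_sqrt (by norm_num)
  set c : ℝ := Real.sqrt 3 * p with hcdef
  have hc : 0 < c := by positivity
  have hc2 : c ^ 2 = 3 * (p : ℝ) ^ 2 := by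
    rw [hcdef, mul_pow, Real.sq_sqrt (by norm_num : (0:ℝ) ≤ 3)]
  set A1 := (completeBipartiteGraph (Fin p) (Fin p)).adjMatrix ℝ with hA1
  set A2 := (completeBipartiteGraph (Fin 1) (Fin 3)).adjMatrix ℝ with hA2
  have hk : (tensorGraph (completeBipartiteGraph (Fin p) (Fin p))
      (completeBipartiteGraph (Fin 1) (Fin 3))).adjMatrix ℝ = A1 ⊗ₖ A2 := tensor_adjMatrix _ _
  have c1 : A1 * (A1 * A1) = ((p * p : ℕ) : ℝ) • A1 := by
    simpa using cbp_adjMatrix_cube (V := Fin p) (W := Fin p)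
  have c2 : A2 * (A2 * A2) = ((3 : ℕ) : ℝ) • A2 := by
    simpa using cbp_adjMatrix_cube (V := Fin 1) (W := Fin 3)
  have hcube : (tensorGraph (completeBipartiteGraph (Fin p) (Fin p))
        (completeBipartiteGraph (Fin 1) (Fin 3))).adjMatrix ℝ *
        ((tensorGraph (completeBipartiteGraph (Fin p) (Fin p))
        (completeBipartiteGraph (Fin 1) (Fin 3))).adjMatrix ℝ *
        (tensorGraph (completeBipartiteGraph (Fin p) (Fin p))
        (completeBipartiteGraph (Fin 1) (Fin 3))).adjMatrix ℝ)
      = ((3 * p ^ 2 : ℕ) : ℝ) • (tensorGraph (completeBipartiteGraph (Fin p) (Fin p))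
        (completeBipartiteGraph (Fin 1) (Fin 3))).adjMatrix ℝ := by
    rw [hk, ← Matrix.mul_kronecker_mul, ← Matrix.mul_kronecker_mul, c1, c2,
      Matrix.smul_kronecker, Matrix.kronecker_smul, smul_smul]
    congr 1
    push_cast
    ring
  refine sum_abs_eigenvalues _ _ c (4 * Real.sqrt 3 * p) hc ?_ ?_
  · intro i
    rw [hc2]
    have := eigenvalues_cube _ (adjMatrix_isHermitian (tensorGraph
      (completeBipartiteGraph (Fin p) (Fin p)) (completeBipartiteGraph (Fin 1) (Fin 3))))
      ((3 * p ^ 2 : ℕ) : ℝ) hcube i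
    push_cast at this
    exact this
  · have htr : ((tensorGraph (completeBipartiteGraph (Fin p) (Fin p))
        (completeBipartiteGraph (Fin 1) (Fin 3))).adjMatrix ℝ *
        (tensorGraph (completeBipartiteGraph (Fin p) (Fin p))
        (completeBipartiteGraph (Fin 1) (Fin 3))).adjMatrix ℝ).trace = 12 * (p : ℝ) ^ 2 := by
      rw [hk, ← Matrix.mul_kronecker_mul, Matrix.trace_kronecker]
      have t1 : (A1 * A1).trace = 2 * ((p * p : ℕ) : ℝ) := by
        simpa using cbp_trace_sq (V := Fin p) (W := Fin p)
      have t2 : (A2 * A2).trace = 2 * ((3 : ℕ) : ℝ) := by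
        simpa using cbp_trace_sq (V := Fin 1) (W := Fin 3)
      rw [t1, t2]
      push_cast
      ring
    rw [htr, hcdef]
    nlinarith [h33]

/-- For every `p ≥ 1`, the Kronecker product `K_{p,p} × K_{1,3}` (which has `8p`
vertices) has energy `4√3 · p`, and since `4√3 · p < 8p` it is hypoenergetic. -/
theorem tensor_completeBipartite_star_hypoenergetic (p : ℕ) (hp : 1 ≤ p) :
    Fintype.card ((Fin p ⊕ Fin p) × (Fin 1 ⊕ Fin 3)) = 8 * p ∧
      graphEnergy (tensorGraph (completeBipartiteGraph (Fin p) (Fin p))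
        (completeBipartiteGraph (Fin 1) (Fin 3))) = 4 * Real.sqrt 3 * p ∧
      4 * Real.sqrt 3 * (p : ℝ) < 8 * p := by
  refine ⟨?_, ?_, ?_⟩
  · simp [Fintype.card_sum]
    ring
  · unfold graphEnergy
    exact energy_value p hp (inst := _)
  · have hp' : (1 : ℝ) ≤ (p : ℝ) := by exact_mod_cast hp
    have h3 : Real.sqrt 3 < 2 := by
      nlinarith [Real.sq_sqrt (show (0:ℝ) ≤ 3 by norm_num), Real.sqrt_nonneg 3]
    nlinarith [Real.sqrt_nonneg 3]
end

section
/- Let G be a hypoenergetic graph of order p and let m ≥ 1. Then the m-shadow graph D_m(G) is hypoenergetic, i.e., ε(D_m(G)) < mp. -/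
open Matrix SimpleGraph Finset

variable {V W : Type*}

open scoped Kronecker

section SqrtHelpers
open scoped MatrixOrder

/-- Square root of a positive semidefinite real matrix (via the CFC). -/
noncomputable def Matrix.PosSemidef.sqrt {n : Type*} [Fintype n] [DecidableEq n]
    {A : Matrix n n ℝ} (_ : A.PosSemidef) : Matrix n n ℝ := CFC.sqrt A

lemma Matrix.PosSemidef.posSemidef_sqrt {n : Type*} [Fintype n] [DecidableEq n]
    {A : Matrix n n ℝ} (hA : A.PosSemidef) : hA.sqrt.PosSemidef :=
  (CFC.sqrt_nonneg A).posSemidef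

lemma Matrix.PosSemidef.sqrt_mul_self {n : Type*} [Fintype n] [DecidableEq n]
    {A : Matrix n n ℝ} (hA : A.PosSemidef) : hA.sqrt * hA.sqrt = A :=
  CFC.sqrt_mul_sqrt_self A hA.nonneg

lemma Matrix.PosSemidef.eq_sqrt_of_sq_eq {n : Type*} [Fintype n] [DecidableEq n]
    {A B : Matrix n n ℝ} (hA : A.PosSemidef) (hB : B.PosSemidef) (h : A ^ 2 = B) :
    A = hB.sqrt :=
  (CFC.sqrt_unique (by rw [← pow_two, h]) hA.nonneg).symm

end SqrtHelpers

/-- The trace of the psd square root of `A ^ 2` is the sum of the absolute values of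
the eigenvalues of the Hermitian matrix `A`. -/
lemma trace_sqrt_sq' {n : Type*} [Fintype n] [DecidableEq n] {A : Matrix n n ℝ}
    (hA : A.IsHermitian) (h2 : (A ^ 2).PosSemidef) :
    h2.sqrt.trace = ∑ i, |hA.eigenvalues i| := by
  set U : Matrix n n ℝ := (hA.eigenvectorUnitary : Matrix n n ℝ)
  have hU : Uᴴ * U = 1 := by
    simpa [star_eq_conjTranspose] using Unitary.coe_star_mul_self hA.eigenvectorUnitary
  set D : Matrix n n ℝ := Matrix.diagonal (fun i => |hA.eigenvalues i|) with hD
  have hpsd : (U * D * Uᴴ).PosSemidef :=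
    (Matrix.posSemidef_diagonal_iff.mpr fun i => abs_nonneg _).mul_mul_conjTranspose_same U
  have hAs : A = U * Matrix.diagonal (fun i => hA.eigenvalues i) * Uᴴ := by
    have := hA.spectral_theorem
    simpa [star_eq_conjTranspose, RCLike.ofReal_real_eq_id, Function.comp_def] using this
  have hsq : (U * D * Uᴴ) ^ 2 = A ^ 2 := by
    have key : ∀ d : n → ℝ, (U * Matrix.diagonal d * Uᴴ) ^ 2
        = U * Matrix.diagonal (fun i => d i * d i) * Uᴴ := by
      intro d
      calc (U * Matrix.diagonal d * Uᴴ) ^ 2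
          = U * Matrix.diagonal d * (Uᴴ * U) * Matrix.diagonal d * Uᴴ := by
            rw [pow_two]; noncomm_ring
        _ = U * (Matrix.diagonal d * Matrix.diagonal d) * Uᴴ := by
            rw [hU, mul_one]; noncomm_ring
        _ = U * Matrix.diagonal (fun i => d i * d i) * Uᴴ := by
            rw [Matrix.diagonal_mul_diagonal]
    rw [hD, key]
    have habs : (fun i => |hA.eigenvalues i| * |hA.eigenvalues i|)
        = fun i => hA.eigenvalues i * hA.eigenvalues i := by
      funext i; exact abs_mul_abs_self _
    rw [habs]
    conv_rhs => rw [hAs]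
    exact (key _).symm
  have := hpsd.eq_sqrt_of_sq_eq h2 hsq
  rw [← this, Matrix.trace_mul_cycle, hU, Matrix.one_mul, hD, Matrix.trace_diagonal]

/-- The all-ones square matrix. -/
private def allOnes (m : ℕ) : Matrix (Fin m) (Fin m) ℝ := Matrix.of fun _ _ => 1


/-- `J ⊗ S` is positive semidefinite when `S` is. -/
lemma kronecker_ones_posSemidef {m : ℕ} {V : Type*} [Fintype V] [DecidableEq V]
    {S : Matrix V V ℝ} (hS : S.PosSemidef) : (allOnes m ⊗ₖ S).PosSemidef := by
  set u : Matrix (Fin 1) (Fin m) ℝ := Matrix.of fun _ _ => 1 with hu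
  set R : Matrix V V ℝ := hS.sqrt with hR
  have hRh : Rᴴ = R := hS.posSemidef_sqrt.1
  have huu : uᴴ * u = allOnes m := by
    ext i j
    simp [Matrix.mul_apply, u, allOnes, Matrix.conjTranspose_apply]
  have hkey : allOnes m ⊗ₖ S = (u ⊗ₖ R)ᴴ * (u ⊗ₖ R) := by
    have hct : (u ⊗ₖ R)ᴴ = uᴴ ⊗ₖ Rᴴ := by
      ext ⟨i, a⟩ ⟨j, b⟩
      simp [Matrix.conjTranspose_apply, Matrix.kroneckerMap_apply]
    rw [hct, ← Matrix.mul_kronecker_mul, huu, hRh, hS.sqrt_mul_self]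
  rw [hkey]
  exact Matrix.posSemidef_conjTranspose_mul_self _

/-- Energy of a Kronecker product with the all-ones matrix. -/
lemma kron_energy {V : Type*} [Fintype V] [DecidableEq V] {m : ℕ}
    {A : Matrix V V ℝ} (hA : A.IsHermitian)
    {B : Matrix (Fin m × V) (Fin m × V) ℝ} (hB : B.IsHermitian)
    (hBA : B = allOnes m ⊗ₖ A) :
    ∑ i, |hB.eigenvalues i| = m * ∑ i, |hA.eigenvalues i| := by
  subst hBA
  have h2A : (A ^ 2).PosSemidef := by
    have h : A ^ 2 = Aᴴ * A := by rw [hA.eq, pow_two]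
    rw [h]; exact Matrix.posSemidef_conjTranspose_mul_self A
  have h2B : ((allOnes m ⊗ₖ A) ^ 2).PosSemidef := by
    have h : (allOnes m ⊗ₖ A) ^ 2 = (allOnes m ⊗ₖ A)ᴴ * (allOnes m ⊗ₖ A) := by
      rw [hB.eq, pow_two]
    rw [h]; exact Matrix.posSemidef_conjTranspose_mul_self _
  rw [← trace_sqrt_sq' hA h2A, ← trace_sqrt_sq' hB h2B]
  have hsqrt : h2B.sqrt = allOnes m ⊗ₖ h2A.sqrt := by
    refine ((kronecker_ones_posSemidef h2A.posSemidef_sqrt).eq_sqrt_of_sq_eq h2B ?_).symm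
    have e1 : (allOnes m ⊗ₖ h2A.sqrt) * (allOnes m ⊗ₖ h2A.sqrt)
        = (allOnes m * allOnes m) ⊗ₖ (h2A.sqrt * h2A.sqrt) :=
      (Matrix.mul_kronecker_mul _ _ _ _).symm
    have e2 : (allOnes m ⊗ₖ A) * (allOnes m ⊗ₖ A)
        = (allOnes m * allOnes m) ⊗ₖ (A * A) :=
      (Matrix.mul_kronecker_mul _ _ _ _).symm
    conv_lhs => rw [pow_two]
    conv_rhs => rw [pow_two]
    rw [e1, e2, h2A.sqrt_mul_self, pow_two]
  rw [hsqrt, Matrix.trace_kronecker]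
  have : (allOnes m).trace = (m : ℝ) := by
    simp [Matrix.trace, allOnes, Matrix.diag]
  rw [this]

open scoped Kronecker in
/-- The adjacency matrix of the shadow graph is the Kronecker product of the all-ones
matrix with the adjacency matrix. -/
lemma shadow_adj [Fintype V] [DecidableEq V] (m : ℕ) (G : SimpleGraph V)
    [DecidableRel G.Adj] [DecidableRel (shadowGraph m G).Adj] :
    (shadowGraph m G).adjMatrix ℝ = allOnes m ⊗ₖ (G.adjMatrix ℝ) := by
  ext ⟨i, u⟩ ⟨j, v⟩
  simp only [SimpleGraph.adjMatrix_apply, Matrix.kroneckerMap_apply, allOnes, Matrix.of_apply,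
    one_mul]
  have : (shadowGraph m G).Adj (i, u) (j, v) ↔ G.Adj u v := Iff.rfl
  simp [this]

/-- If `G` is a hypoenergetic graph of order `p` and `m ≥ 1`, then the m-shadow
graph `D_m(G)` is hypoenergetic: its energy is less than its order `m * p`. -/
theorem shadowGraph_hypoenergetic [Fintype V] [DecidableEq V]
    (G : SimpleGraph V) (p m : ℕ) (hp : Fintype.card V = p)
    (hyp : graphEnergy G < p) (hm : 1 ≤ m) :
    graphEnergy (shadowGraph m G) < (m : ℝ) * p := by
  classical
  unfold graphEnergy at hyp ⊢
  rw [kron_energy (adjMatrix_isHermitian G) (adjMatrix_isHermitian (shadowGraph m G))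
    (shadow_adj m G)]
  have hm' : (0 : ℝ) < (m : ℝ) := by exact_mod_cast Nat.lt_of_lt_of_le Nat.zero_lt_one hm
  exact mul_lt_mul_of_pos_left hyp hm'
end

section
/- Let p ≥ 1 and m ≥ 14. Then the Kronecker product K_{1,m} × K_p of the star K_{1,m} with the complete graph K_p is hypoenergetic, i.e., ε(K_{1,m} × K_p) = 4√m·(p−1) < p(m+1). -/
open Matrix SimpleGraph Finset

variable {V W : Type*}

open Polynomial in
lemma charpoly_conj' {n R : Type*} [Fintype n] [DecidableEq n] [CommRing R]
    (P Q M : Matrix n n R) (h : P * Q = 1) :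
    (P * M * Q).charpoly = M.charpoly := by
  have h' : Q * P = 1 := mul_eq_one_comm.mp h
  have hm : (P.map C) * (Q.map C) = (1 : Matrix n n R[X]) := by
    rw [← Matrix.map_mul, h, Matrix.map_one _ (map_zero C) (map_one C)]
  have key : charmatrix (P * M * Q) = P.map C * charmatrix M * Q.map C := by
    rw [charmatrix, charmatrix, mul_sub, sub_mul]
    congr 1
    · rw [scalar_apply, ← Matrix.smul_one_eq_diagonal, Matrix.mul_smul, mul_one,
        Matrix.smul_mul, hm]
    · simp [RingHom.mapMatrix_apply, ← Matrix.map_mul]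
  rw [Matrix.charpoly, key, det_mul, det_mul, mul_comm ((P.map C).det), mul_assoc,
    ← det_mul, hm, det_one, mul_one, Matrix.charpoly]

open Polynomial in
lemma charpoly_diagonal {n R : Type*} [Fintype n] [DecidableEq n] [CommRing R] (d : n → R) :
    (Matrix.diagonal d).charpoly = ∏ i, (X - C (d i)) := by
  have : charmatrix (Matrix.diagonal d) = Matrix.diagonal (fun i => X - C (d i)) := by
    ext i j
    by_cases hij : i = j <;> simp [charmatrix_apply, Matrix.diagonal_apply, hij]
  rw [Matrix.charpoly, this, Matrix.det_diagonal]

open Polynomial in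
lemma hermitian_charpoly {n : Type*} [Fintype n] [DecidableEq n] {A : Matrix n n ℝ}
    (hA : A.IsHermitian) :
    A.charpoly = ∏ i, (X - C (hA.eigenvalues i)) := by
  have hU : (hA.eigenvectorUnitary : Matrix n n ℝ) * (star (hA.eigenvectorUnitary : Matrix n n ℝ)) = 1 :=
    (Matrix.mem_unitaryGroup_iff).mp hA.eigenvectorUnitary.2
  calc A.charpoly = ((hA.eigenvectorUnitary : Matrix n n ℝ) * Matrix.diagonal (RCLike.ofReal ∘ hA.eigenvalues)
      * (star (hA.eigenvectorUnitary : Matrix n n ℝ))).charpoly := by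
        conv_lhs => rw [hA.spectral_theorem]
        rw [Unitary.conjStarAlgAut_apply]
    _ = (Matrix.diagonal (RCLike.ofReal ∘ hA.eigenvalues)).charpoly := charpoly_conj' _ _ _ hU
    _ = ∏ i, (X - C (hA.eigenvalues i)) := by
        rw [_root_.charpoly_diagonal]; simp

open Polynomial in
lemma hermitian_roots {n : Type*} [Fintype n] [DecidableEq n] {A : Matrix n n ℝ}
    (hA : A.IsHermitian) :
    Finset.univ.val.map hA.eigenvalues = A.charpoly.roots := by
  rw [hermitian_charpoly hA, ← Polynomial.roots_multiset_prod_X_sub_C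
    (Finset.univ.val.map hA.eigenvalues), Finset.prod, Multiset.map_map]
  rfl


lemma sum_ite_val_zero {m : ℕ} (hm : 0 < m) (a : ℝ) :
    ∑ k : Fin m, (if k.val = 0 then a else 0) = a := by
  have : ∀ k : Fin m, (if k.val = 0 then a else 0) = (if k = ⟨0, hm⟩ then a else 0) := by
    intro k; congr 1; rw [eq_iff_iff, Fin.ext_iff]
  rw [Finset.sum_congr rfl (fun k _ => this k)]
  simp [Finset.sum_ite_eq']

lemma sum_ite_eq_elt {m : ℕ} (y : Fin m) (a : ℝ) :
    ∑ k : Fin m, (if k = y then a else 0) = a := by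
  simp [Finset.sum_ite_eq']

noncomputable def starP (m : ℕ) : Matrix (Fin 1 ⊕ Fin m) (Fin 1 ⊕ Fin m) ℝ :=
  fun x y => match x, y with
  | Sum.inl _, Sum.inl _ => Real.sqrt m
  | Sum.inl _, Sum.inr k => if k.val = 0 then -Real.sqrt m else 0
  | Sum.inr _, Sum.inl _ => 1
  | Sum.inr j, Sum.inr k => if k.val = 0 then 1
      else (if j = k then 1 else 0) - (if j.val = 0 then 1 else 0)

noncomputable def starQ (m : ℕ) : Matrix (Fin 1 ⊕ Fin m) (Fin 1 ⊕ Fin m) ℝ :=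
  fun x y => match x, y with
  | Sum.inl _, Sum.inl _ => Real.sqrt m / (2*m)
  | Sum.inl _, Sum.inr _ => 1/(2*m)
  | Sum.inr k, Sum.inl _ => if k.val = 0 then -Real.sqrt m/(2*m) else 0
  | Sum.inr k, Sum.inr j => if k.val = 0 then 1/(2*m) else (if j = k then 1 else 0) - 1/m

noncomputable def starD (m : ℕ) : Fin 1 ⊕ Fin m → ℝ :=
  fun x => match x with
  | Sum.inl _ => Real.sqrt m
  | Sum.inr k => if k.val = 0 then -Real.sqrt m else 0

lemma sum_ite_val_zero' {m : ℕ} (hm : 0 < m) (f : Fin m → ℝ) :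
    ∑ k : Fin m, (if k.val = 0 then f k else 0) = f ⟨0, hm⟩ := by
  have : ∀ k : Fin m, (if k.val = 0 then f k else 0) = (if k = ⟨0, hm⟩ then f k else 0) := by
    intro k; congr 1; rw [eq_iff_iff, Fin.ext_iff]
  rw [Finset.sum_congr rfl (fun k _ => this k)]
  simp [Finset.sum_ite_eq']

lemma starQP (m : ℕ) (hm : 1 ≤ m) : starQ m * starP m = 1 := by
  have hm' : 0 < m := hm
  have hs : Real.sqrt m * Real.sqrt m = (m : ℝ) := Real.mul_self_sqrt (by positivity)
  have hm0 : (m : ℝ) ≠ 0 := by positivity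
  ext x y
  have simp1 : ∀ z w : Fin 1, (1 : Matrix (Fin 1 ⊕ Fin m) (Fin 1 ⊕ Fin m) ℝ)
      (Sum.inl z) (Sum.inl w) = 1 := fun z w => by
    rw [Subsingleton.elim z w]; simp [Matrix.one_apply]
  rcases x with x | x <;> rcases y with y | y <;>
    simp only [Matrix.mul_apply, Fintype.sum_sum_type, Fin.sum_univ_one, starQ, starP]
  · -- inl inl
    rw [simp1]
    simp only [mul_one, Finset.sum_const, Finset.card_univ, Fintype.card_fin, nsmul_eq_mul]
    field_simp
    nlinarith [hs]
  · -- inl inr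
    rw [show (1 : Matrix (Fin 1 ⊕ Fin m) (Fin 1 ⊕ Fin m) ℝ) (Sum.inl x) (Sum.inr y) = 0 by
      simp [Matrix.one_apply]]
    by_cases hy : y.val = 0
    · simp only [hy, if_true, mul_ite, mul_one, mul_neg, Finset.sum_const, Finset.card_univ,
        Fintype.card_fin, nsmul_eq_mul]
      field_simp
      nlinarith [hs]
    · simp only [hy, if_false, mul_zero, mul_sub, mul_ite, mul_one,
        Finset.sum_sub_distrib, sum_ite_eq_elt, sum_ite_val_zero hm']
      ring
  · -- inr inl
    rw [show (1 : Matrix (Fin 1 ⊕ Fin m) (Fin 1 ⊕ Fin m) ℝ) (Sum.inr x) (Sum.inl y) = 0 by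
      simp [Matrix.one_apply]]
    by_cases hx : x.val = 0
    · simp only [hx, if_true, mul_one, Finset.sum_const, Finset.card_univ,
        Fintype.card_fin, nsmul_eq_mul]
      field_simp
      nlinarith [hs]
    · simp only [hx, if_false, zero_mul, sub_mul, one_mul, mul_one,
        Finset.sum_sub_distrib, sum_ite_eq_elt, Finset.sum_const, Finset.card_univ,
        Fintype.card_fin, nsmul_eq_mul, ite_mul]
      field_simp
      ring
  · -- inr inr
    rw [show (1 : Matrix (Fin 1 ⊕ Fin m) (Fin 1 ⊕ Fin m) ℝ) (Sum.inr x) (Sum.inr y)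
        = if x = y then 1 else 0 by simp [Matrix.one_apply]]
    by_cases hx : x.val = 0 <;> by_cases hy : y.val = 0
    · have hxy : x = y := Fin.ext (hx.trans hy.symm)
      simp only [hx, hy, hxy, if_true, if_pos rfl, mul_ite, mul_one, mul_neg, neg_mul,
        neg_neg, Finset.sum_const, Finset.card_univ, Fintype.card_fin, nsmul_eq_mul]
      field_simp
      nlinarith [hs]
    · have hxy : ¬ (x = y) := fun h => hy (h ▸ hx)
      simp only [hx, hy, if_true, if_false, hxy, mul_zero, mul_sub, mul_ite, mul_one,
        Finset.sum_sub_distrib, sum_ite_eq_elt, sum_ite_val_zero hm', Finset.sum_const,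
        Finset.card_univ, Fintype.card_fin, nsmul_eq_mul]
      ring
    · have hxy : ¬ (x = y) := fun h => hx (h ▸ hy)
      simp only [hx, hy, if_true, if_false, hxy, zero_mul, sub_mul, one_mul, mul_one,
        ite_mul, Finset.sum_sub_distrib, sum_ite_eq_elt, Finset.sum_const,
        Finset.card_univ, Fintype.card_fin, nsmul_eq_mul]
      field_simp
      ring
    · simp only [hx, hy, if_false, zero_mul, sub_mul, ite_mul, one_mul, mul_sub, mul_one,
        sub_sub_cancel, Finset.sum_sub_distrib, sum_ite_eq_elt,
        sum_ite_val_zero' hm' (fun k => (if k = y then (1:ℝ) else 0) - (1:ℝ)/m),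
        sum_ite_val_zero hm', Finset.sum_const, Finset.card_univ, Fintype.card_fin,
        nsmul_eq_mul]
      simp only [Finset.sum_ite_eq', Finset.mem_univ, if_true, mul_ite, mul_one, mul_zero,
        sum_ite_eq_elt, sum_ite_val_zero hm']
      simp only [hx, if_false]
      ring

lemma starSP (m : ℕ) (hm : 1 ≤ m)
    [inst : DecidableRel (completeBipartiteGraph (Fin 1) (Fin m)).Adj] :
    (completeBipartiteGraph (Fin 1) (Fin m)).adjMatrix ℝ * starP m
      = starP m * Matrix.diagonal (starD m) := by
  have hm' : 0 < m := hm
  have hs : Real.sqrt m * Real.sqrt m = (m : ℝ) := Real.mul_self_sqrt (by positivity)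
  ext x y
  rw [Matrix.mul_diagonal]
  rcases x with x | x <;>
    simp only [Matrix.mul_apply, Fintype.sum_sum_type, Fin.sum_univ_one,
      SimpleGraph.adjMatrix_apply, completeBipartiteGraph_adj, Sum.isLeft_inl,
      Sum.isRight_inl, Sum.isLeft_inr, Sum.isRight_inr, Bool.false_eq_true, or_self,
      true_and, and_true, false_and,
      and_false, or_false, false_or, if_true, if_false, true_or, or_true] <;>
    rcases y with y | y <;>
    simp only [starP, starD, one_mul, zero_mul, if_true, if_false, mul_one, mul_zero,
      zero_add, add_zero, Finset.sum_const_zero, Finset.sum_const, Finset.card_univ,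
      Fintype.card_fin, nsmul_eq_mul]
  · exact hs.symm
  · by_cases hy : y.val = 0
    · simp only [hy, if_true, Finset.sum_const, Finset.card_univ, Fintype.card_fin,
        nsmul_eq_mul, mul_one, neg_mul, neg_neg, hs]
      nlinarith [hs]
    · simp only [hy, if_false, Finset.sum_sub_distrib, sum_ite_eq_elt,
        sum_ite_val_zero hm', mul_zero, sub_self]
  · by_cases hy : y.val = 0 <;> simp only [hy, if_true, if_false, one_mul, mul_zero]

noncomputable def compP (p : ℕ) : Matrix (Fin p) (Fin p) ℝ :=
  fun i k => if k.val = 0 then 1 else (if i = k then 1 else 0) - (if i.val = 0 then 1 else 0)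

noncomputable def compQ (p : ℕ) : Matrix (Fin p) (Fin p) ℝ :=
  fun k i => if k.val = 0 then 1/p else (if i = k then 1 else 0) - 1/p

noncomputable def compD (p : ℕ) : Fin p → ℝ :=
  fun k => if k.val = 0 then (p : ℝ) - 1 else -1

lemma compQP (p : ℕ) (hp : 1 ≤ p) : compQ p * compP p = 1 := by
  have hp' : 0 < p := hp
  have hp0 : (p : ℝ) ≠ 0 := by positivity
  ext k c
  rw [Matrix.one_apply]
  simp only [Matrix.mul_apply, compQ, compP]
  by_cases hk : k.val = 0 <;> by_cases hc : c.val = 0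
  · have hkc : k = c := Fin.ext (hk.trans hc.symm)
    simp only [hk, hc, hkc, if_true, if_pos rfl, mul_one, Finset.sum_const,
      Finset.card_univ, Fintype.card_fin, nsmul_eq_mul]
    field_simp
  · have hkc : ¬ (k = c) := fun h => hc (h ▸ hk)
    simp only [hk, hc, hkc, if_true, if_false, mul_sub, mul_ite, mul_one, mul_zero,
      Finset.sum_sub_distrib, sum_ite_eq_elt, sum_ite_val_zero hp']
    ring
  · have hkc : ¬ (k = c) := fun h => hk (h ▸ hc)
    simp only [hk, hc, hkc, if_true, if_false, sub_mul, ite_mul, one_mul, mul_one,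
      Finset.sum_sub_distrib, sum_ite_eq_elt, Finset.sum_const, Finset.card_univ,
      Fintype.card_fin, nsmul_eq_mul]
    field_simp
    ring
  · simp only [hk, hc, if_false, sub_mul, ite_mul, one_mul, mul_sub, mul_one, ite_mul,
      Finset.sum_sub_distrib, sum_ite_eq_elt, sum_ite_val_zero hp', Finset.sum_const,
      Finset.card_univ, Fintype.card_fin, nsmul_eq_mul]
    simp only [Finset.sum_ite_eq', Finset.mem_univ, if_true, mul_ite, mul_one, mul_zero,
      sum_ite_eq_elt, sum_ite_val_zero hp']
    simp only [ite_self, Finset.sum_ite_eq', Finset.mem_univ, if_true]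
    simp only [hk, if_false]
    ring

lemma compKP (p : ℕ) (hp : 1 ≤ p) [inst : DecidableRel (⊤ : SimpleGraph (Fin p)).Adj] :
    (⊤ : SimpleGraph (Fin p)).adjMatrix ℝ * compP p
      = compP p * Matrix.diagonal (compD p) := by
  have hp' : 0 < p := hp
  ext i c
  rw [Matrix.mul_diagonal]
  simp only [Matrix.mul_apply, SimpleGraph.adjMatrix_apply, SimpleGraph.top_adj, compP,
    compD, ite_mul, one_mul, zero_mul]
  have key : ∀ f : Fin p → ℝ,
      (∑ j, if i ≠ j then f j else 0) = (∑ j, f j) - f i := by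
    intro f
    have : ∀ j, (if i ≠ j then f j else 0) = f j - (if j = i then f j else 0) := by
      intro j
      by_cases h : j = i
      · subst h; simp
      · simp [h, Ne.symm h]
    rw [Finset.sum_congr rfl (fun j _ => this j), Finset.sum_sub_distrib]
    simp [Finset.sum_ite_eq']
  rw [key]
  by_cases hc : c.val = 0
  · simp only [hc, if_true, Finset.sum_const, Finset.card_univ, Fintype.card_fin,
      nsmul_eq_mul, mul_one]
  · simp only [hc, if_false, Finset.sum_sub_distrib, sum_ite_eq_elt, sum_ite_val_zero hp',
      mul_neg, mul_one]
    ring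

open Polynomial in
lemma roots_prod_X_sub_C' {n : Type*} [Fintype n] [DecidableEq n] (f : n → ℝ) :
    (∏ i, (X - C (f i))).roots = Finset.univ.val.map f := by
  rw [← Polynomial.roots_multiset_prod_X_sub_C (Finset.univ.val.map f),
    Finset.prod, Multiset.map_map]
  rfl

/-- For `p ≥ 1` and `m ≥ 14`, the Kronecker product `K_{1,m} × K_p` is
hypoenergetic: its energy equals `4√m · (p - 1)`, which is less than its order
`p * (m + 1)`. -/
theorem tensor_star_complete_hypoenergetic (p m : ℕ) (hp : 1 ≤ p) (hm : 14 ≤ m) :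
    graphEnergy (tensorGraph (completeBipartiteGraph (Fin 1) (Fin m))
        (⊤ : SimpleGraph (Fin p))) = 4 * Real.sqrt m * ((p : ℝ) - 1) ∧
      4 * Real.sqrt m * ((p : ℝ) - 1) < (p : ℝ) * (m + 1) := by
  classical
  have hm' : 0 < m := by omega
  have hp' : 0 < p := hp
  set s : ℝ := Real.sqrt m with hs_def
  have hs_nonneg : 0 ≤ s := Real.sqrt_nonneg _
  have hs : s * s = (m : ℝ) := Real.mul_self_sqrt (by positivity)
  set G := tensorGraph (completeBipartiteGraph (Fin 1) (Fin m)) (⊤ : SimpleGraph (Fin p))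
    with hG
  have hA : (G.adjMatrix ℝ).IsHermitian := adjMatrix_isHermitian G
  -- the adjacency matrix is the Kronecker product
  have hAeq : G.adjMatrix ℝ = Matrix.kroneckerMap (· * ·)
      ((completeBipartiteGraph (Fin 1) (Fin m)).adjMatrix ℝ)
      ((⊤ : SimpleGraph (Fin p)).adjMatrix ℝ) := by
    ext ⟨a, i⟩ ⟨b, j⟩
    simp only [SimpleGraph.adjMatrix_apply, Matrix.kroneckerMap_apply, hG, tensorGraph]
    by_cases h1 : (completeBipartiteGraph (Fin 1) (Fin m)).Adj a b <;>
      by_cases h2 : ((⊤ : SimpleGraph (Fin p)).Adj i j) <;>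
      simp [h1, h2]
  -- diagonal form
  have hPQ1 : starP m * starQ m = 1 := mul_eq_one_comm.mp (starQP m (by omega))
  have hPQ2 : compP p * compQ p = 1 := mul_eq_one_comm.mp (compQP p hp)
  have hS : (completeBipartiteGraph (Fin 1) (Fin m)).adjMatrix ℝ
      = starP m * Matrix.diagonal (starD m) * starQ m := by
    rw [← starSP m (by omega), Matrix.mul_assoc, hPQ1, Matrix.mul_one]
  have hK : (⊤ : SimpleGraph (Fin p)).adjMatrix ℝ
      = compP p * Matrix.diagonal (compD p) * compQ p := by
    rw [← compKP p hp, Matrix.mul_assoc, hPQ2, Matrix.mul_one]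
  set dd : (Fin 1 ⊕ Fin m) × Fin p → ℝ := fun x => starD m x.1 * compD p x.2 with hdd
  have hAconj : G.adjMatrix ℝ
      = (Matrix.kroneckerMap (· * ·) (starP m) (compP p))
        * Matrix.diagonal dd
        * (Matrix.kroneckerMap (· * ·) (starQ m) (compQ p)) := by
    rw [hAeq, hS, hK, Matrix.mul_kronecker_mul, Matrix.mul_kronecker_mul,
      Matrix.diagonal_kronecker_diagonal]
  have hPQ : (Matrix.kroneckerMap (· * ·) (starP m) (compP p))
      * (Matrix.kroneckerMap (· * ·) (starQ m) (compQ p)) = 1 := by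
    rw [← Matrix.mul_kronecker_mul]
    rw [hPQ1, hPQ2]
    exact Matrix.one_kronecker_one
  -- eigenvalue multiset
  have hchar : (G.adjMatrix ℝ).charpoly = (Matrix.diagonal dd).charpoly := by
    rw [hAconj]
    exact charpoly_conj' _ _ _ hPQ
  have hroots : Finset.univ.val.map hA.eigenvalues = Finset.univ.val.map dd := by
    rw [hermitian_roots hA, hchar, _root_.charpoly_diagonal, roots_prod_X_sub_C']
  -- energy computation
  have henergy : graphEnergy G = ∑ x, |dd x| := by
    have h1 : graphEnergy G = ∑ i, |hA.eigenvalues i| := rfl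
    rw [h1]
    have h2 : ∀ f : (Fin 1 ⊕ Fin m) × Fin p → ℝ,
        (∑ x, |f x|) = ((Finset.univ.val.map f).map abs).sum := by
      intro f
      rw [Multiset.map_map]
      rfl
    rw [h2, h2, hroots]
  have hsum1 : (∑ x : Fin 1 ⊕ Fin m, |starD m x|) = 2 * s := by
    simp only [Fintype.sum_sum_type, Fin.sum_univ_one, starD]
    have : ∀ k : Fin m, |if k.val = 0 then -s else 0| = (if k.val = 0 then s else 0) := by
      intro k
      by_cases hk : k.val = 0 <;> simp [hk, abs_of_nonneg hs_nonneg]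
    rw [Finset.sum_congr rfl (fun k _ => this k), sum_ite_val_zero hm',
      abs_of_nonneg hs_nonneg]
    ring
  have hsum2 : (∑ x : Fin p, |compD p x|) = 2 * ((p : ℝ) - 1) := by
    have hp1 : (1 : ℝ) ≤ (p : ℝ) := by exact_mod_cast hp
    simp only [compD]
    have : ∀ k : Fin p, |if k.val = 0 then (p : ℝ) - 1 else -1|
        = (if k.val = 0 then (p : ℝ) - 2 else 0) + 1 := by
      intro k
      by_cases hk : k.val = 0 <;> simp [hk, abs_of_nonneg (by linarith : (0:ℝ) ≤ (p:ℝ) - 1)]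
      linarith
    rw [Finset.sum_congr rfl (fun k _ => this k), Finset.sum_add_distrib,
      sum_ite_val_zero hp']
    simp only [Finset.sum_const, Finset.card_univ, Fintype.card_fin, nsmul_eq_mul, mul_one]
    ring
  have hval : graphEnergy G = 4 * s * ((p : ℝ) - 1) := by
    rw [henergy]
    have : (∑ x : (Fin 1 ⊕ Fin m) × Fin p, |dd x|)
        = (∑ x : Fin 1 ⊕ Fin m, |starD m x|) * (∑ x : Fin p, |compD p x|) := by
      rw [Finset.sum_mul_sum]
      rw [Fintype.sum_prod_type]
      simp only [hdd, abs_mul]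
    rw [this, hsum1, hsum2]
    ring
  refine ⟨hval, ?_⟩
  have h4s : 4 * s ≤ (m : ℝ) + 1 := by
    have hm14 : (14 : ℝ) ≤ (m : ℝ) := by exact_mod_cast hm
    nlinarith [sq_nonneg (s - 4)]
  have hp1 : (1 : ℝ) ≤ (p : ℝ) := by exact_mod_cast hp
  have hmpos : (0 : ℝ) < (m : ℝ) + 1 := by positivity
  nlinarith [mul_le_mul_of_nonneg_right h4s (by linarith : (0:ℝ) ≤ (p : ℝ) - 1)]
end

section
/- Let G be an orderenergetic graph of order p. Then the 2-splitting graph spl₂(G) and the 3-shadow graph D₃(G) are equiorderenergetic: both have 3p vertices and both have energy 3p (so both are orderenergetic). -/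
open Matrix SimpleGraph Finset

variable {V W : Type*}

-- ==== auxiliary ====
open Polynomial Kronecker
set_option linter.unusedSectionVars false
section MyAux
variable {n : Type*} [Fintype n] [DecidableEq n]

lemma myCharmatrix_eq (M : Matrix n n ℝ) :
    charmatrix M = (X : ℝ[X]) • (1 : Matrix n n ℝ[X]) - M.map C := by
  ext i j
  by_cases h : i = j <;>
    simp [charmatrix_apply, h, Matrix.one_apply, diagonal_apply]

lemma myCharpoly_conj (P M Q : Matrix n n ℝ) (h1 : P * Q = 1) :
    (P * M * Q).charpoly = M.charpoly := by
  have hm : charmatrix (P * M * Q) = P.map C * charmatrix M * Q.map C := by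
    rw [myCharmatrix_eq, myCharmatrix_eq, mul_sub, sub_mul]
    congr 1
    · rw [mul_smul_comm, smul_mul_assoc, mul_one, ← Matrix.map_mul, h1,
        Matrix.map_one _ (map_zero C) (map_one C)]
    · rw [← Matrix.map_mul, ← Matrix.map_mul]
  have hdet : det (P.map C) * det (Q.map C) = 1 := by
    rw [← det_mul, ← Matrix.map_mul, h1, Matrix.map_one _ (map_zero C) (map_one C), det_one]
  rw [charpoly, hm, det_mul, det_mul, charpoly]
  calc det (P.map C) * det (charmatrix M) * det (Q.map C)
      = det (charmatrix M) * (det (P.map C) * det (Q.map C)) := by ring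
    _ = det (charmatrix M) := by rw [hdet, mul_one]

lemma myCharpoly_diagonal (d : n → ℝ) :
    (diagonal d).charpoly = ∏ i, (X - C (d i)) := by
  have h : charmatrix (diagonal d) = diagonal fun i => X - C (d i) := by
    ext i j
    by_cases h : i = j <;> simp [charmatrix_apply, diagonal_apply, h]
  rw [charpoly, h, det_diagonal]

lemma myRoots_charpoly (A : Matrix n n ℝ) (hA : A.IsHermitian) :
    A.charpoly.roots = Finset.univ.val.map hA.eigenvalues := by
  have hU1 : (hA.eigenvectorUnitary : Matrix n n ℝ) * star (hA.eigenvectorUnitary : Matrix n n ℝ) = 1 :=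
    Matrix.mem_unitaryGroup_iff.mp hA.eigenvectorUnitary.2
  have hD : (RCLike.ofReal ∘ hA.eigenvalues : n → ℝ) = hA.eigenvalues := by
    funext i; simp
  conv_lhs => rw [hA.spectral_theorem]
  rw [hD, Unitary.conjStarAlgAut_apply, myCharpoly_conj _ _ _ hU1, myCharpoly_diagonal]
  have h2 : ∏ i, (X - C (hA.eigenvalues i)) =
      ((Finset.univ.val.map hA.eigenvalues).map fun a => X - C a).prod := by
    rw [Multiset.map_map]; rfl
  rw [h2, roots_multiset_prod_X_sub_C]

lemma myCharpoly_blockDiagonal {o m : Type*} [Fintype o] [DecidableEq o] [Fintype m] [DecidableEq m]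
    (M : o → Matrix m m ℝ) :
    (blockDiagonal M).charpoly = ∏ k, (M k).charpoly := by
  have h : charmatrix (blockDiagonal M) = blockDiagonal fun k => charmatrix (M k) := by
    ext ⟨i, k⟩ ⟨j, l⟩
    by_cases h : k = l
    · subst h
      by_cases hij : i = j <;>
        simp [charmatrix_apply, blockDiagonal_apply, diagonal_apply, Prod.ext_iff, hij]
    · simp [charmatrix_apply, blockDiagonal_apply, diagonal_apply, Prod.ext_iff, h]
  rw [charpoly, h, det_blockDiagonal]
  rfl

lemma myKron_diag (B : Matrix (Fin 3) (Fin 3) ℝ) (d : n → ℝ) :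
    B ⊗ₖ diagonal d = blockDiagonal fun u => d u • B := by
  ext ⟨i, u⟩ ⟨j, v⟩
  by_cases h : u = v <;>
    simp [kroneckerMap_apply, diagonal_apply, blockDiagonal_apply, h, mul_comm]

lemma myCharpoly_kron (B : Matrix (Fin 3) (Fin 3) ℝ) (A : Matrix n n ℝ) (hA : A.IsHermitian) :
    (B ⊗ₖ A).charpoly = ∏ u, (hA.eigenvalues u • B).charpoly := by
  have hU1 : ((1 : Matrix (Fin 3) (Fin 3) ℝ) ⊗ₖ (hA.eigenvectorUnitary : Matrix n n ℝ)) *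
      ((1 : Matrix (Fin 3) (Fin 3) ℝ) ⊗ₖ star (hA.eigenvectorUnitary : Matrix n n ℝ)) = 1 := by
    rw [← mul_kronecker_mul, mul_one,
      Matrix.mem_unitaryGroup_iff.mp hA.eigenvectorUnitary.2, one_kronecker_one]
  have hD : (RCLike.ofReal ∘ hA.eigenvalues : n → ℝ) = hA.eigenvalues := by funext i; simp
  have key : B ⊗ₖ A =
      ((1 : Matrix (Fin 3) (Fin 3) ℝ) ⊗ₖ (hA.eigenvectorUnitary : Matrix n n ℝ)) *
        (B ⊗ₖ diagonal hA.eigenvalues) *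
        ((1 : Matrix (Fin 3) (Fin 3) ℝ) ⊗ₖ star (hA.eigenvectorUnitary : Matrix n n ℝ)) := by
    rw [← mul_kronecker_mul, ← mul_kronecker_mul, one_mul, mul_one]
    conv_lhs => rw [hA.spectral_theorem, hD, Unitary.conjStarAlgAut_apply]
  rw [key, myCharpoly_conj _ _ _ hU1, myKron_diag, myCharpoly_blockDiagonal]

lemma smul_spl_mat (t : ℝ) :
    t • (!![1,1,1;1,0,0;1,0,0] : Matrix (Fin 3) (Fin 3) ℝ) = !![t,t,t;t,0,0;t,0,0] := by
  ext i j
  fin_cases i <;> fin_cases j <;> simp [Matrix.vecHead, Matrix.vecTail]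

lemma smul_shadow_mat (t : ℝ) :
    t • (!![1,1,1;1,1,1;1,1,1] : Matrix (Fin 3) (Fin 3) ℝ) = !![t,t,t;t,t,t;t,t,t] := by
  ext i j
  fin_cases i <;> fin_cases j <;> simp [Matrix.vecHead, Matrix.vecTail]

lemma charpoly_smul_spl (t : ℝ) :
    ((t • (!![1,1,1;1,0,0;1,0,0] : Matrix (Fin 3) (Fin 3) ℝ)).charpoly) =
      (X - C (t + t)) * ((X - C (-t)) * (X - C 0)) := by
  rw [smul_spl_mat, charpoly, det_fin_three]
  simp [charmatrix_apply, diagonal_apply, Matrix.vecHead, Matrix.vecTail, Fin.ext_iff]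
  ring

lemma charpoly_smul_shadow (t : ℝ) :
    ((t • (!![1,1,1;1,1,1;1,1,1] : Matrix (Fin 3) (Fin 3) ℝ)).charpoly) =
      (X - C (t + t + t)) * ((X - C 0) * (X - C 0)) := by
  rw [smul_shadow_mat, charpoly, det_fin_three]
  simp [charmatrix_apply, diagonal_apply, Matrix.vecHead, Matrix.vecTail, Fin.ext_iff]
  ring

lemma roots_triple_prod (a : n → ℝ) (b : n → ℝ) (c : n → ℝ) :
    (∏ u, ((X - C (a u)) * ((X - C (b u)) * (X - C (c u))))).roots =
      Finset.univ.val.bind fun u => ({a u, b u, c u} : Multiset ℝ) := by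
  have h : ∏ u, ((X - C (a u)) * ((X - C (b u)) * (X - C (c u)))) =
      ((Finset.univ.val.bind fun u => ({a u, b u, c u} : Multiset ℝ)).map
        fun x => X - C x).prod := by
    rw [Multiset.map_bind, Multiset.prod_bind, Finset.prod_eq_multiset_prod]
    refine congrArg Multiset.prod (Multiset.map_congr rfl ?_)
    intro u _
    simp [Multiset.insert_eq_cons]
  rw [h, roots_multiset_prod_X_sub_C]


end MyAux

def eSpl {V : Type*} : Fin 3 × V ≃ V ⊕ (Fin 2 × V) where
  toFun x :=
    match x with
    | (⟨0, _⟩, v) => Sum.inl v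
    | (⟨1, _⟩, v) => Sum.inr (0, v)
    | (⟨2, _⟩, v) => Sum.inr (1, v)
  invFun y :=
    match y with
    | Sum.inl v => ((0 : Fin 3), v)
    | Sum.inr (i, v) => (i.succ, v)
  left_inv := by
    rintro ⟨⟨i, hi⟩, v⟩
    interval_cases i <;> rfl
  right_inv := by
    rintro (v | ⟨⟨i, hi⟩, v⟩)
    · rfl
    · interval_cases i <;> rfl

lemma adj_shadow [Fintype V] [DecidableEq V] (G : SimpleGraph V) (instG : DecidableRel G.Adj)
    (instS : DecidableRel (shadowGraph 3 G).Adj) :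
    (shadowGraph 3 G).adjMatrix ℝ =
      (!![1,1,1;1,1,1;1,1,1] : Matrix (Fin 3) (Fin 3) ℝ) ⊗ₖ G.adjMatrix ℝ := by
  ext ⟨i, u⟩ ⟨j, v⟩
  rw [adjMatrix_apply]
  have h1 : (!![1,1,1;1,1,1;1,1,1] : Matrix (Fin 3) (Fin 3) ℝ) i j = 1 := by
    fin_cases i <;> fin_cases j <;> simp [Matrix.vecHead, Matrix.vecTail]
  rw [kroneckerMap_apply, h1, one_mul]
  by_cases h : G.Adj u v <;> simp [adjMatrix_apply, shadowGraph, h]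

lemma adj_spl [Fintype V] [DecidableEq V] (G : SimpleGraph V) (instG : DecidableRel G.Adj)
    (instS : DecidableRel (splittingGraph 2 G).Adj) :
    (splittingGraph 2 G).adjMatrix ℝ =
      reindex eSpl eSpl ((!![1,1,1;1,0,0;1,0,0] : Matrix (Fin 3) (Fin 3) ℝ) ⊗ₖ G.adjMatrix ℝ) := by
  ext a b
  rw [adjMatrix_apply]
  rcases a with u | ⟨i, u⟩ <;> rcases b with v | ⟨j, v⟩
  · by_cases h : G.Adj u v <;>
      simp [adjMatrix_apply, splittingGraph, h, eSpl, kroneckerMap_apply, Matrix.vecHead, Matrix.vecTail]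
  · by_cases h : G.Adj u v <;>
      fin_cases j <;>
      simp [adjMatrix_apply, splittingGraph, h, eSpl, kroneckerMap_apply, Matrix.vecHead, Matrix.vecTail]
  · by_cases h : G.Adj u v <;>
      fin_cases i <;>
      simp [adjMatrix_apply, splittingGraph, h, eSpl, kroneckerMap_apply, Matrix.vecHead, Matrix.vecTail]
  · fin_cases i <;> fin_cases j <;>
      simp [adjMatrix_apply, splittingGraph, eSpl, kroneckerMap_apply, Matrix.vecHead, Matrix.vecTail]

lemma sum_abs_eigen_eq [Fintype W] [DecidableEq W] (H : SimpleGraph W) [inst : DecidableRel H.Adj] :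
    ∑ i, |(adjMatrix_isHermitian H).eigenvalues i| =
      (((H.adjMatrix ℝ).charpoly.roots).map fun x => |x|).sum := by
  rw [myRoots_charpoly _ (adjMatrix_isHermitian H), Multiset.map_map]
  rfl

lemma sum_abs_eigen_congr [Fintype W] [DecidableEq W] (H : SimpleGraph W)
    (i1 i2 : DecidableRel H.Adj) :
    ∑ i, |(@adjMatrix_isHermitian W _ _ H i1).eigenvalues i| =
      ∑ i, |(@adjMatrix_isHermitian W _ _ H i2).eigenvalues i| := by
  rw [Subsingleton.elim i1 i2]

lemma graphEnergy_spl [Fintype V] [DecidableEq V] (G : SimpleGraph V) :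
    graphEnergy (splittingGraph 2 G) = 3 * graphEnergy G := by
  classical
  letI instG : DecidableRel G.Adj := inferInstance
  letI instS : DecidableRel (splittingGraph 2 G).Adj := inferInstance
  unfold graphEnergy
  rw [sum_abs_eigen_congr (splittingGraph 2 G) _ instS, sum_abs_eigen_congr G _ instG,
    sum_abs_eigen_eq (inst := instS)]
  rw [adj_spl G instG instS, charpoly_reindex,
    myCharpoly_kron _ _ (adjMatrix_isHermitian G)]
  set ev := (adjMatrix_isHermitian G).eigenvalues with hev
  have hcp : ∀ u, ((ev u • (!![1,1,1;1,0,0;1,0,0] : Matrix (Fin 3) (Fin 3) ℝ)).charpoly)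
      = (X - C (ev u + ev u)) * ((X - C (-ev u)) * (X - C 0)) := fun u => charpoly_smul_spl _
  rw [Finset.prod_congr rfl fun u _ => hcp u, roots_triple_prod, Multiset.map_bind,
    Multiset.sum_bind]
  have habs : ∀ u ∈ Finset.univ, ((({ev u + ev u, -ev u, (0:ℝ)} : Multiset ℝ).map
      fun x => |x|).sum) = 3 * |ev u| := by
    intro u _
    have h2 : |ev u + ev u| = 2 * |ev u| := by
      rw [show ev u + ev u = 2 * ev u from by ring, abs_mul,
        abs_of_nonneg (by norm_num : (0:ℝ) ≤ 2)]
    simp [Multiset.insert_eq_cons, abs_neg, h2]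
    ring
  calc (Finset.univ.val.map fun u => ((({ev u + ev u, -ev u, (0:ℝ)} : Multiset ℝ).map
        fun x => |x|).sum)).sum
      = ∑ u, ((({ev u + ev u, -ev u, (0:ℝ)} : Multiset ℝ).map fun x => |x|).sum) := rfl
    _ = ∑ u, 3 * |ev u| := Finset.sum_congr rfl habs
    _ = 3 * ∑ u, |ev u| := by rw [Finset.mul_sum]

lemma graphEnergy_shadow [Fintype V] [DecidableEq V] (G : SimpleGraph V) :
    graphEnergy (shadowGraph 3 G) = 3 * graphEnergy G := by
  classical
  letI instG : DecidableRel G.Adj := inferInstance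
  letI instS : DecidableRel (shadowGraph 3 G).Adj := inferInstance
  unfold graphEnergy
  rw [sum_abs_eigen_congr (shadowGraph 3 G) _ instS, sum_abs_eigen_congr G _ instG,
    sum_abs_eigen_eq (inst := instS)]
  rw [adj_shadow G instG instS, myCharpoly_kron _ _ (adjMatrix_isHermitian G)]
  set ev := (adjMatrix_isHermitian G).eigenvalues with hev
  have hcp : ∀ u, ((ev u • (!![1,1,1;1,1,1;1,1,1] : Matrix (Fin 3) (Fin 3) ℝ)).charpoly)
      = (X - C (ev u + ev u + ev u)) * ((X - C 0) * (X - C 0)) := fun u => charpoly_smul_shadow _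
  rw [Finset.prod_congr rfl fun u _ => hcp u, roots_triple_prod, Multiset.map_bind,
    Multiset.sum_bind]
  have habs : ∀ u ∈ Finset.univ, ((({ev u + ev u + ev u, (0:ℝ), (0:ℝ)} : Multiset ℝ).map
      fun x => |x|).sum) = 3 * |ev u| := by
    intro u _
    have h3 : |ev u + ev u + ev u| = 3 * |ev u| := by
      rw [show ev u + ev u + ev u = 3 * ev u from by ring, abs_mul,
        abs_of_nonneg (by norm_num : (0:ℝ) ≤ 3)]
    simp [Multiset.insert_eq_cons, h3]
  calc (Finset.univ.val.map fun u => ((({ev u + ev u + ev u, (0:ℝ), (0:ℝ)} : Multiset ℝ).map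
        fun x => |x|).sum)).sum
      = ∑ u, ((({ev u + ev u + ev u, (0:ℝ), (0:ℝ)} : Multiset ℝ).map fun x => |x|).sum) := rfl
    _ = ∑ u, 3 * |ev u| := Finset.sum_congr rfl habs
    _ = 3 * ∑ u, |ev u| := by rw [Finset.mul_sum]

/-- If `G` is an orderenergetic graph of order `p`, then the 2-splitting graph
`spl₂(G)` and the 3-shadow graph `D₃(G)` are equiorderenergetic: both have
`3 * p` vertices and both have energy `3 * p`. -/
theorem splitting_shadow_equiorderenergetic [Fintype V] [DecidableEq V]
    (G : SimpleGraph V) (p : ℕ) (hp : Fintype.card V = p)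
    (hord : graphEnergy G = p) :
    Fintype.card (V ⊕ (Fin 2 × V)) = 3 * p ∧
      Fintype.card (Fin 3 × V) = 3 * p ∧
      graphEnergy (splittingGraph 2 G) = (3 * p : ℕ) ∧
      graphEnergy (shadowGraph 3 G) = (3 * p : ℕ) := by
  refine ⟨?_, ?_, ?_, ?_⟩
  · simp [Fintype.card_sum, Fintype.card_prod, hp]; omega
  · simp [Fintype.card_prod, hp]
  · rw [graphEnergy_spl, hord]; push_cast; ring
  · rw [graphEnergy_shadow, hord]; push_cast; ring
end
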